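/- Assume the MFS setup with eigenvalue bounds (H_s) and boundary-data decay |v̂(m)| ≤ C_v·ρ^{−|m|} for all m ∈ ℤ, where ρ > R² (and R > 1). Then there exists a constant C > 0, depending on R, ρ, c_s, C_s, C_v (and on ŝ(0), v̂(0)) but not on N, such that for every even integer N ≥ 2 there exists a coefficient vector α̂ ∈ ℂ^N with boundary error t(α̂) ≤ C·R^{−N}. -/

import Mathlib

open scoped BigOperators ENNReal NNReal

noncomputable section

/-- The unique representative of `m` modulo `N` lying in the window `(-N/2, N/2]`. -/
def winRep (N : ℕ) (m : ℤ) : ℤ := (m + (N : ℤ) / 2 - 1) % (N : ℤ) - ((N : ℤ) / 2 - 1)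

/-- The index window `(-N/2, N/2]` as a finite set of integers. -/
def window (N : ℕ) : Finset ℤ := Finset.Icc (-(N : ℤ) / 2 + 1) ((N : ℤ) / 2)

/-- The norm `|α̂|` of a coefficient vector indexed by the window. -/
def coefNorm (N : ℕ) (a : ℤ → ℂ) : ℝ := Real.sqrt (∑ k ∈ window N, ‖a k‖ ^ 2)

/-- The boundary error norm
`t(α̂) = (2π·∑_{m∈ℤ} |(N/(2π))·ŝ(m)·α̂_{⟨m⟩_N} − v̂(m)|²)^{1/2}`, valued in `[0,∞]`. -/
def tErr (N : ℕ) (s v a : ℤ → ℂ) : ℝ≥0∞ :=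
  (ENNReal.ofReal (2 * Real.pi) *
    ∑' m : ℤ, (‖((N : ℂ) / (2 * (Real.pi : ℂ))) * s m * a (winRep N m) - v m‖₊ : ℝ≥0∞) ^ 2)
    ^ (1 / 2 : ℝ)

lemma aux_nat_mul_pow_le {x : ℝ} (h0 : 0 ≤ x) (h1 : x < 1) (n : ℕ) :
    (n : ℝ) * x ^ n ≤ (1 - x)⁻¹ := by
  calc (n : ℝ) * x ^ n = ∑ _i ∈ Finset.range n, x ^ n := by
        simp [Finset.sum_const, mul_comm]
    _ ≤ ∑ i ∈ Finset.range n, x ^ i := by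
        refine Finset.sum_le_sum fun i hi => ?_
        exact pow_le_pow_of_le_one h0 h1.le (Finset.mem_range.mp hi).le
    _ ≤ ∑' i : ℕ, x ^ i := by
        refine Summable.sum_le_tsum _ (fun i _ => by positivity) ?_
        exact summable_geometric_of_lt_one h0 h1
    _ = (1 - x)⁻¹ := tsum_geometric_of_lt_one h0 h1

lemma aux_tsum_int_pow (z : ℝ≥0∞) : (∑' k : ℤ, z ^ k.natAbs) ≤ 2 * (1 - z)⁻¹ := by
  have he : (fun k : ℤ => z ^ k.natAbs)
      = fun k : ℤ => Int.rec (fun n : ℕ => z ^ n) (fun n : ℕ => z ^ (n + 1)) k := by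
    funext k; cases k <;> rfl
  rw [he]
  rw [tsum_int_rec ENNReal.summable ENNReal.summable]
  have h2 : (∑' n : ℕ, z ^ (n + 1)) ≤ ∑' n : ℕ, z ^ n :=
    ENNReal.tsum_comp_le_tsum_of_injective (fun a b h => by omega) (fun n => z ^ n)
  calc (∑' n : ℕ, z ^ n) + ∑' n : ℕ, z ^ (n + 1) ≤ (∑' n : ℕ, z ^ n) + ∑' n : ℕ, z ^ n :=
        add_le_add le_rfl h2
    _ = 2 * (1 - z)⁻¹ := by rw [ENNReal.tsum_geometric]; ring

lemma winRep_core (N : ℕ) (hN : 0 < N) (m : ℤ) :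
    (N : ℤ) ∣ m - winRep N m ∧ 0 ≤ winRep N m + ((N : ℤ) / 2 - 1) ∧
      winRep N m + ((N : ℤ) / 2 - 1) < N := by
  have hN' : (0 : ℤ) < N := by exact_mod_cast hN
  unfold winRep
  refine ⟨?_, ?_, ?_⟩
  · have : m - ((m + (N : ℤ) / 2 - 1) % (N : ℤ) - ((N : ℤ) / 2 - 1)) =
        (m + (N : ℤ) / 2 - 1) - (m + (N : ℤ) / 2 - 1) % (N : ℤ) := by ring
    rw [this]
    exact Int.dvd_self_sub_of_emod_eq rfl
  · have := Int.emod_nonneg (m + (N : ℤ) / 2 - 1) (ne_of_gt hN')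
    omega
  · have := Int.emod_lt_of_pos (m + (N : ℤ) / 2 - 1) hN'
    omega

lemma winRep_mem (N : ℕ) (hN2 : 2 ≤ N) (hNe : Even N) (m : ℤ) : winRep N m ∈ window N := by
  obtain ⟨H, hH⟩ := hNe
  have hHZ : (N : ℤ) = 2 * H := by push_cast [hH]; ring
  obtain ⟨-, h1, h2⟩ := winRep_core N (by omega) m
  simp only [window, Finset.mem_Icc]
  omega

lemma winRep_eq_self (N : ℕ) (hNe : Even N) (m : ℤ) (hm : m ∈ window N) :
    winRep N m = m := by
  obtain ⟨H, hH⟩ := hNe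
  have hHZ : (N : ℤ) = 2 * H := by push_cast [hH]; ring
  simp only [window, Finset.mem_Icc] at hm
  have h0 : 0 ≤ m + (N : ℤ) / 2 - 1 := by omega
  have h1 : m + (N : ℤ) / 2 - 1 < (N : ℤ) := by omega
  unfold winRep
  rw [Int.emod_eq_of_lt h0 h1]
  ring

lemma winRep_decomp (N : ℕ) (hN : 0 < N) (m : ℤ) :
    m = winRep N m + (N : ℤ) * ((m - winRep N m) / (N : ℤ)) := by
  obtain ⟨hd, -, -⟩ := winRep_core N hN m
  linarith [Int.ediv_mul_cancel hd]

set_option maxHeartbeats 1600000 in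
/-- MFS convergence on the unit disc, case `ρ > R²`: rate `R^{-N}`. -/
theorem mfs_convergence_rho_gt_Rsq
    (R ρ cs Cs Cv : ℝ) (hR : 1 < R) (hρ1 : 1 < ρ) (hρ2 : R ^ 2 < ρ)
    (hcs : 0 < cs) (hcsCs : cs ≤ Cs) (hCv : 0 < Cv)
    (s v : ℤ → ℂ)
    (hs0 : s 0 ≠ 0) (hs0' : ‖s 0‖ ≤ Cs)
    (hsl : ∀ m : ℤ, m ≠ 0 → cs / |(m : ℝ)| * R ^ (-|m|) ≤ ‖s m‖)
    (hsu : ∀ m : ℤ, m ≠ 0 → ‖s m‖ ≤ Cs / |(m : ℝ)| * R ^ (-|m|))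
    (hv : ∀ m : ℤ, ‖v m‖ ≤ Cv * ρ ^ (-|m|)) :
    ∃ C : ℝ, 0 < C ∧ ∀ N : ℕ, Even N → 2 ≤ N →
      ∃ a : ℤ → ℂ, tErr N s v a ≤ ENNReal.ofReal (C * R ^ (-(N : ℝ))) := by
  have hR0 : (0:ℝ) < R := one_pos.trans hR
  have hρ0 : (0:ℝ) < ρ := one_pos.trans hρ1
  have hCs0 : 0 < Cs := lt_of_lt_of_le hcs hcsCs
  set r : ℝ := R⁻¹ with hrdef
  have hr0 : 0 < r := inv_pos.mpr hR0
  have hr1 : r < 1 := by rw [hrdef]; exact inv_lt_one_of_one_lt₀ hR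
  set q : ℝ := R ^ 2 / ρ with hqdef
  have hq0 : 0 < q := by positivity
  have hq1 : q < 1 := (div_lt_one hρ0).mpr hρ2
  set η : ℝ := (1 + q) / 2 with hηdef
  have hη0 : 0 < η := by positivity
  have hη1 : η < 1 := by rw [hηdef]; linarith
  have hqη : q < η := by rw [hηdef]; linarith
  set ζ : ℝ := max η r with hζdef
  have hζ0 : 0 < ζ := lt_of_lt_of_le hη0 (le_max_left _ _)
  have hζ1 : ζ < 1 := max_lt hη1 hr1
  have hηζ : η ≤ ζ := le_max_left _ _
  have hrζ : r ≤ ζ := le_max_right _ _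
  have hζ1' : 0 < 1 - ζ := by linarith
  have hqη1 : q / η < 1 := (div_lt_one hη0).mpr hqη
  have hqη0 : 0 ≤ q / η := by positivity
  -- `s` never vanishes
  have zpow_eq : ∀ x : ℝ, 0 < x → ∀ k : ℤ, x ^ (-|k|) = (x⁻¹) ^ k.natAbs := by
    intro x hx k
    rw [Int.abs_eq_natAbs, zpow_neg, ← inv_zpow, zpow_natCast]
  have habs_cast : ∀ k : ℤ, |(k : ℝ)| = (k.natAbs : ℝ) := by
    intro k
    rw [← Int.cast_abs, Int.abs_eq_natAbs, Int.cast_natCast]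
  have hsne : ∀ k : ℤ, s k ≠ 0 := by
    intro k
    rcases eq_or_ne k 0 with rfl | hk
    · exact hs0
    · have h := hsl k hk
      have hka : (0:ℝ) < |(k : ℝ)| := abs_pos.mpr (Int.cast_ne_zero.mpr hk)
      have h1 : 0 < cs / |(k : ℝ)| * R ^ (-|k|) := by
        apply mul_pos (div_pos hcs hka)
        positivity
      intro h0; rw [h0, norm_zero] at h; linarith
  set M : ℝ := max (Cv / cs * (1 - q / η)⁻¹) (‖v 0‖ / ‖s 0‖) with hMdef
  have hM0 : 0 < M := by
    refine lt_of_lt_of_le ?_ (le_max_left _ _)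
    have : 0 < 1 - q / η := by linarith
    positivity
  -- uniform bound on `‖v k / s k‖`
  have hΦ : ∀ k : ℤ, ‖v k / s k‖ ≤ M * (η * r) ^ k.natAbs := by
    intro k
    rcases eq_or_ne k 0 with rfl | hk
    · simp only [Int.natAbs_zero, pow_zero, mul_one]
      rw [norm_div]
      exact le_max_right _ _
    · have hka : (0:ℝ) < |(k : ℝ)| := abs_pos.mpr (Int.cast_ne_zero.mpr hk)
      have hnum : ‖v k‖ ≤ Cv * (ρ⁻¹) ^ k.natAbs := by
        have := hv k; rwa [zpow_eq ρ hρ0 k] at this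
      have hden : cs / |(k : ℝ)| * r ^ k.natAbs ≤ ‖s k‖ := by
        have := hsl k hk; rwa [zpow_eq R hR0 k] at this
      have hden0 : 0 < cs / |(k : ℝ)| * r ^ k.natAbs := by
        apply mul_pos (div_pos hcs hka); positivity
      rw [norm_div]
      have step1 : ‖v k‖ / ‖s k‖ ≤ (Cv * (ρ⁻¹) ^ k.natAbs) / (cs / |(k : ℝ)| * r ^ k.natAbs) :=
        div_le_div₀ (by positivity) hnum hden0 hden
      refine step1.trans ?_
      have hqr : ρ⁻¹ = (q * r) * r := by
        rw [hqdef, hrdef]; field_simp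
      have hkn : (0:ℝ) < (k.natAbs : ℝ) := by
        rw [← habs_cast k]; exact hka
      have halg : (Cv * (ρ⁻¹) ^ k.natAbs) / (cs / |(k : ℝ)| * r ^ k.natAbs)
          = Cv / cs * (((k.natAbs : ℝ)) * (q / η) ^ k.natAbs) * (η * r) ^ k.natAbs := by
        rw [hqr, habs_cast k]
        have hc : (q / η) ^ k.natAbs * (η * r) ^ k.natAbs = (q * r) ^ k.natAbs := by
          rw [← mul_pow]
          congr 1
          field_simp
        calc Cv * ((q * r) * r) ^ k.natAbs / (cs / (k.natAbs : ℝ) * r ^ k.natAbs)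
            = Cv / cs * (k.natAbs : ℝ) * (q * r) ^ k.natAbs := by
              rw [mul_pow]
              field_simp
          _ = Cv / cs * (((k.natAbs : ℝ)) * ((q / η) ^ k.natAbs * (η * r) ^ k.natAbs)) := by
              rw [hc]; ring
          _ = Cv / cs * (((k.natAbs : ℝ)) * (q / η) ^ k.natAbs) * (η * r) ^ k.natAbs := by
              ring
      rw [halg]
      have hb := aux_nat_mul_pow_le hqη0 hqη1 k.natAbs
      have : Cv / cs * ((k.natAbs : ℝ) * (q / η) ^ k.natAbs) ≤ Cv / cs * (1 - q / η)⁻¹ := by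
        apply mul_le_mul_of_nonneg_left hb (by positivity)
      refine mul_le_mul_of_nonneg_right (this.trans (le_max_left _ _)) (by positivity)
  set A : ℝ := 2 * Cs ^ 2 * M ^ 2 + 2 * Cv ^ 2 with hAdef
  have hA0 : 0 < A := by positivity
  set D : ℝ := A / ζ * (2 * (1 - ζ)⁻¹) ^ 2 with hDdef
  have hD0 : 0 < D := by positivity
  refine ⟨Real.sqrt (2 * Real.pi * D), Real.sqrt_pos.mpr (by positivity), ?_⟩
  intro N hNe hN2
  have hNpos : 0 < N := by omega
  obtain ⟨H, hH⟩ := id hNe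
  have hHZ : (N : ℤ) = 2 * H := by push_cast [hH]; ring
  have h0win : (0:ℤ) ∈ window N := by
    simp only [window, Finset.mem_Icc]; omega
  refine ⟨fun k => (2 * (Real.pi : ℂ) / (N : ℂ)) * (v k / s k), ?_⟩
  have hNC : ((N : ℕ) : ℂ) ≠ 0 := Nat.cast_ne_zero.mpr (by omega)
  have hπC : ((Real.pi : ℝ) : ℂ) ≠ 0 := by
    exact_mod_cast Real.pi_ne_zero
  -- simplification of the summand
  have hfm : ∀ m : ℤ, ((N : ℂ) / (2 * (Real.pi : ℂ))) * s m *
      ((2 * (Real.pi : ℂ) / (N : ℂ)) * (v (winRep N m) / s (winRep N m))) - v m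
      = s m * (v (winRep N m) / s (winRep N m)) - v m := by
    intro m
    have key : ((N : ℂ) / (2 * (Real.pi : ℂ))) * (2 * (Real.pi : ℂ) / (N : ℂ)) = 1 := by
      field_simp
    calc ((N : ℂ) / (2 * (Real.pi : ℂ))) * s m *
        ((2 * (Real.pi : ℂ) / (N : ℂ)) * (v (winRep N m) / s (winRep N m))) - v m
        = s m * (v (winRep N m) / s (winRep N m)) *
            (((N : ℂ) / (2 * (Real.pi : ℂ))) * (2 * (Real.pi : ℂ) / (N : ℂ))) - v m := by ring
      _ = _ := by rw [key, mul_one]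
  set z : ℝ≥0∞ := ENNReal.ofReal ζ with hzdef
  set G : ℤ × ℤ → ℝ≥0∞ :=
    fun p => ENNReal.ofReal (A * r ^ (2 * N) / ζ) * z ^ (p.1.natAbs + p.2.natAbs) with hGdef
  set d : ℤ → ℤ × ℤ := fun m => ((m - winRep N m) / (N : ℤ), winRep N m) with hddef
  have hd_inj : Function.Injective d := by
    intro m m' h
    rw [hddef] at h
    obtain ⟨e1, e2⟩ := Prod.mk.injEq .. ▸ h
    have h1 := winRep_decomp N hNpos m
    have h2 := winRep_decomp N hNpos m'
    rw [h1, h2, e1, e2]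
  -- pointwise bound
  have hpt : ∀ m : ℤ,
      (‖((N : ℂ) / (2 * (Real.pi : ℂ))) * s m *
        ((2 * (Real.pi : ℂ) / (N : ℂ)) * (v (winRep N m) / s (winRep N m))) - v m‖₊ : ℝ≥0∞) ^ 2
      ≤ G (d m) := by
    intro m
    rw [hfm m]
    by_cases hmw : m ∈ window N
    · have hw : winRep N m = m := winRep_eq_self N hNe m hmw
      rw [hw]
      have hz : s m * (v m / s m) - v m = 0 := by
        rw [mul_div_assoc', mul_comm, mul_div_assoc, div_self (hsne m), mul_one, sub_self]
      rw [hz]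
      simp only [nnnorm_zero, ENNReal.coe_zero]
      simpa using zero_le _
    · -- m outside the window
      set k : ℤ := winRep N m with hkdef
      set j : ℤ := (m - k) / (N : ℤ) with hjdef
      have hm : m = k + (N : ℤ) * j := winRep_decomp N hNpos m
      have hkw : k ∈ window N := winRep_mem N hN2 hNe m
      simp only [window, Finset.mem_Icc] at hkw
      have hj0 : j ≠ 0 := by
        intro h
        apply hmw
        rw [hm, h, mul_zero, add_zero]
        simp only [window, Finset.mem_Icc]; omega
      -- integer absolute value facts
      have habsk : 2 * |k| ≤ (N : ℤ) := by
        rcases le_or_gt 0 k with h | h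
        · rw [abs_of_nonneg h]; omega
        · rw [abs_of_neg h]; omega
      have habsm : (N : ℤ) * |j| ≤ |m| + |k| := by
        calc (N : ℤ) * |j| = |(N : ℤ) * j| := by
              rw [abs_mul, abs_of_nonneg (by positivity : (0:ℤ) ≤ (N : ℤ))]
          _ = |m - k| := by rw [hm]; ring_nf
          _ ≤ |m| + |k| := by
              rw [sub_eq_add_neg]
              exact (abs_add_le m (-k)).trans_eq (by rw [abs_neg])
      have hj1 : 1 ≤ |j| := Int.one_le_abs hj0
      have hNj : (N : ℤ) ≤ (N : ℤ) * |j| :=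
        le_mul_of_one_le_right (by positivity) hj1
      have hNj2 : ((N : ℤ) - 1) ≤ ((N : ℤ) - 1) * |j| :=
        le_mul_of_one_le_right (by omega) hj1
      have hPQ : (N : ℤ) * |j| = ((N : ℤ) - 1) * |j| + |j| := by ring
      have zf3a : |k| ≤ |m| := by linarith
      have zf3b : |j| ≤ |m| := by
        have hN2' : (2 : ℤ) ≤ (N : ℤ) := by omega
        linarith
      have zf4 : (N : ℤ) ≤ 2 * |m| := by linarith
      -- natAbs versions
      have f1 : 1 ≤ j.natAbs := by omega
      have f2 : N * j.natAbs ≤ m.natAbs + k.natAbs := by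
        zify
        simpa [Int.natCast_natAbs] using habsm
      have zf3 : |k| + |j| ≤ 2 * |m| := by linarith
      have f3 : k.natAbs + j.natAbs ≤ 2 * m.natAbs := by
        zify
        simpa [Int.natCast_natAbs] using zf3
      have f4 : N ≤ 2 * m.natAbs := by
        zify
        simpa [Int.natCast_natAbs] using zf4
      have hm0 : m ≠ 0 := by
        intro h; apply hmw; rw [h]; exact h0win
      -- norm bounds
      have hsm : ‖s m‖ ≤ Cs * r ^ m.natAbs := by
        have h := hsu m hm0
        rw [zpow_eq R hR0 m] at h
        refine h.trans ?_
        have h1 : (1:ℝ) ≤ |(m : ℝ)| := by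
          rw [habs_cast m]
          exact_mod_cast Nat.one_le_iff_ne_zero.mpr (Int.natAbs_ne_zero.mpr hm0)
        have : Cs / |(m : ℝ)| ≤ Cs := div_le_self hCs0.le h1
        exact mul_le_mul_of_nonneg_right this (by positivity)
      have hvm : ‖v m‖ ≤ Cv * (ρ⁻¹) ^ m.natAbs := by
        have := hv m; rwa [zpow_eq ρ hρ0 m] at this
      have hnorm : ‖s m * (v k / s k) - v m‖ ≤
          Cs * r ^ m.natAbs * (M * (η * r) ^ k.natAbs) + Cv * (ρ⁻¹) ^ m.natAbs := by
        refine (norm_sub_le _ _).trans (add_le_add ?_ hvm)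
        rw [norm_mul]
        exact mul_le_mul hsm (hΦ k) (norm_nonneg _) (by positivity)
      -- the key real bound
      obtain ⟨t, ht⟩ : ∃ t, j.natAbs = t + 1 := ⟨j.natAbs - 1, by omega⟩
      have key : ‖s m * (v k / s k) - v m‖ ^ 2 ≤
          A * r ^ (2 * N) / ζ * ζ ^ (j.natAbs + k.natAbs) := by
        set t1 : ℝ := Cs * r ^ m.natAbs * (M * (η * r) ^ k.natAbs) with ht1def
        set t2 : ℝ := Cv * (ρ⁻¹) ^ m.natAbs with ht2def
        have ht1sq : t1 ^ 2 ≤ Cs ^ 2 * M ^ 2 * (r ^ (2 * N) * ζ ^ (k.natAbs + t)) := by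
          have e0 : t1 = Cs * M * η ^ k.natAbs * r ^ (m.natAbs + k.natAbs) := by
            rw [ht1def, mul_pow, pow_add]; ring
          have e1 : t1 ^ 2 = Cs ^ 2 * M ^ 2 * ((η ^ 2) ^ k.natAbs *
              (r ^ (m.natAbs + k.natAbs)) ^ 2) := by
            rw [e0, ← pow_mul, mul_comm 2 k.natAbs, pow_mul]
            ring
          rw [e1]
          have e2 : (r ^ (m.natAbs + k.natAbs)) ^ 2 ≤ (r ^ (N * j.natAbs)) ^ 2 := by
            apply pow_le_pow_left₀ (by positivity)
            exact pow_le_pow_of_le_one hr0.le hr1.le f2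
          have e3 : (r ^ (N * j.natAbs)) ^ 2 = r ^ (2 * N) * ((r ^ (2 * N)) ^ t) := by
            rw [ht, ← pow_mul, ← pow_mul, ← pow_add]
            congr 1
            ring
          have e4 : (r ^ (2 * N)) ^ t ≤ ζ ^ t := by
            apply pow_le_pow_left₀ (by positivity)
            calc r ^ (2 * N) ≤ r ^ 1 := pow_le_pow_of_le_one hr0.le hr1.le (by omega)
              _ = r := pow_one r
              _ ≤ ζ := hrζ
          have e5 : (η ^ 2) ^ k.natAbs ≤ ζ ^ k.natAbs := by
            apply pow_le_pow_left₀ (by positivity)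
            have hsq : η ^ 2 ≤ η := by
              calc η ^ 2 = η * η := sq η
                _ ≤ 1 * η := mul_le_mul_of_nonneg_right hη1.le hη0.le
                _ = η := one_mul η
            exact hsq.trans hηζ
          calc Cs ^ 2 * M ^ 2 * ((η ^ 2) ^ k.natAbs * (r ^ (m.natAbs + k.natAbs)) ^ 2)
              ≤ Cs ^ 2 * M ^ 2 * (ζ ^ k.natAbs * (r ^ (2 * N) * ζ ^ t)) := by
                have := mul_le_mul e5 (e2.trans_eq e3 |>.trans (by
                  exact mul_le_mul_of_nonneg_left e4 (by positivity)))
                  (by positivity) (by positivity)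
                exact mul_le_mul_of_nonneg_left this (by positivity)
            _ = Cs ^ 2 * M ^ 2 * (r ^ (2 * N) * ζ ^ (k.natAbs + t)) := by
                rw [pow_add]; ring
        have ht2sq : t2 ^ 2 ≤ Cv ^ 2 * (r ^ (2 * N) * ζ ^ (k.natAbs + t)) := by
          have hqr : ρ⁻¹ = q * r ^ 2 := by
            rw [hqdef, hrdef]; field_simp
          have e1 : t2 ^ 2 = Cv ^ 2 * (q ^ (2 * m.natAbs) * r ^ (4 * m.natAbs)) := by
            rw [ht2def, hqr]
            ring
          rw [e1]
          have e2 : q ^ (2 * m.natAbs) ≤ q ^ (k.natAbs + j.natAbs) :=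
            pow_le_pow_of_le_one hq0.le hq1.le f3
          have e3 : q ^ (k.natAbs + j.natAbs) ≤ ζ ^ (k.natAbs + t) := by
            have g1 : q ^ k.natAbs ≤ ζ ^ k.natAbs :=
              pow_le_pow_left₀ hq0.le (hqη.le.trans hηζ) _
            have g2 : q ^ (t + 1) ≤ ζ ^ t := by
              calc q ^ (t + 1) ≤ ζ ^ (t + 1) :=
                    pow_le_pow_left₀ hq0.le (hqη.le.trans hηζ) _
                _ ≤ ζ ^ t := pow_le_pow_of_le_one hζ0.le hζ1.le (by omega)
            rw [ht]
            calc q ^ (k.natAbs + (t + 1)) = q ^ k.natAbs * q ^ (t + 1) := pow_add q _ _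
              _ ≤ ζ ^ k.natAbs * ζ ^ t := mul_le_mul g1 g2 (by positivity) (by positivity)
              _ = ζ ^ (k.natAbs + t) := (pow_add ζ _ _).symm
          have e4 : r ^ (4 * m.natAbs) ≤ r ^ (2 * N) :=
            pow_le_pow_of_le_one hr0.le hr1.le (by omega)
          calc Cv ^ 2 * (q ^ (2 * m.natAbs) * r ^ (4 * m.natAbs))
              ≤ Cv ^ 2 * (ζ ^ (k.natAbs + t) * r ^ (2 * N)) := by
                have := mul_le_mul (e2.trans e3) e4 (by positivity) (by positivity)
                exact mul_le_mul_of_nonneg_left this (by positivity)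
            _ = Cv ^ 2 * (r ^ (2 * N) * ζ ^ (k.natAbs + t)) := by ring
        have hsq : ‖s m * (v k / s k) - v m‖ ^ 2 ≤ 2 * t1 ^ 2 + 2 * t2 ^ 2 := by
          have h1 : ‖s m * (v k / s k) - v m‖ ^ 2 ≤ (t1 + t2) ^ 2 := by
            apply pow_le_pow_left₀ (norm_nonneg _) hnorm
          have h2 : (t1 + t2) ^ 2 ≤ 2 * t1 ^ 2 + 2 * t2 ^ 2 := by
            have h3 : 0 ≤ (t1 - t2) ^ 2 := sq_nonneg _
            have e : 2 * t1 ^ 2 + 2 * t2 ^ 2 - (t1 + t2) ^ 2 = (t1 - t2) ^ 2 := by ring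
            linarith [e ▸ h3]
          exact h1.trans h2
        have hcomb : 2 * t1 ^ 2 + 2 * t2 ^ 2 ≤ A * (r ^ (2 * N) * ζ ^ (k.natAbs + t)) := by
          rw [hAdef]
          have e : (2 * Cs ^ 2 * M ^ 2 + 2 * Cv ^ 2) * (r ^ (2 * N) * ζ ^ (k.natAbs + t))
              = 2 * (Cs ^ 2 * M ^ 2 * (r ^ (2 * N) * ζ ^ (k.natAbs + t)))
                + 2 * (Cv ^ 2 * (r ^ (2 * N) * ζ ^ (k.natAbs + t))) := by ring
          rw [e]
          linarith [ht1sq, ht2sq]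
        refine (hsq.trans hcomb).trans_eq ?_
        have hpow : ζ ^ (j.natAbs + k.natAbs) = ζ ^ (k.natAbs + t) * ζ := by
          rw [← pow_succ]
          congr 1
          omega
        rw [hpow]
        field_simp
      -- convert to ENNReal
      calc (‖s m * (v k / s k) - v m‖₊ : ℝ≥0∞) ^ 2
          = ENNReal.ofReal (‖s m * (v k / s k) - v m‖ ^ 2) := by
            rw [ENNReal.ofReal_pow (norm_nonneg _), ← ENNReal.ofReal_coe_nnreal, coe_nnnorm]
        _ ≤ ENNReal.ofReal (A * r ^ (2 * N) / ζ * ζ ^ (j.natAbs + k.natAbs)) :=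
            ENNReal.ofReal_le_ofReal key
        _ = G (d m) := by
            rw [hGdef, hddef]
            simp only
            rw [← hkdef, ← hjdef, ENNReal.ofReal_mul (by positivity),
              ENNReal.ofReal_pow hζ0.le, hzdef]
  -- sum the bound
  have hsum : (∑' m : ℤ, (‖((N : ℂ) / (2 * (Real.pi : ℂ))) * s m *
      ((2 * (Real.pi : ℂ) / (N : ℂ)) * (v (winRep N m) / s (winRep N m))) - v m‖₊ : ℝ≥0∞) ^ 2)
      ≤ ENNReal.ofReal (D * r ^ (2 * N)) := by
    have c1 : (∑' m : ℤ, (‖((N : ℂ) / (2 * (Real.pi : ℂ))) * s m *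
        ((2 * (Real.pi : ℂ) / (N : ℂ)) * (v (winRep N m) / s (winRep N m))) - v m‖₊ : ℝ≥0∞) ^ 2)
        ≤ ∑' m : ℤ, G (d m) := ENNReal.tsum_le_tsum hpt
    have c2 : (∑' m : ℤ, G (d m)) ≤ ∑' p : ℤ × ℤ, G p :=
      ENNReal.tsum_comp_le_tsum_of_injective hd_inj G
    have c3 : (∑' p : ℤ × ℤ, G p) = ENNReal.ofReal (A * r ^ (2 * N) / ζ) *
        ((∑' jj : ℤ, z ^ jj.natAbs) * (∑' kk : ℤ, z ^ kk.natAbs)) := by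
      rw [ENNReal.tsum_prod']
      calc (∑' (jj : ℤ) (kk : ℤ), G (jj, kk))
          = ∑' (jj : ℤ) (kk : ℤ),
              (ENNReal.ofReal (A * r ^ (2 * N) / ζ) * z ^ jj.natAbs) * z ^ kk.natAbs := by
            simp only [hGdef, pow_add, ← mul_assoc]
        _ = ∑' (jj : ℤ), (ENNReal.ofReal (A * r ^ (2 * N) / ζ) * z ^ jj.natAbs) *
              ∑' (kk : ℤ), z ^ kk.natAbs := by
            congr 1
            funext jj
            exact ENNReal.tsum_mul_left
        _ = (∑' (jj : ℤ), ENNReal.ofReal (A * r ^ (2 * N) / ζ) * z ^ jj.natAbs) *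
              ∑' (kk : ℤ), z ^ kk.natAbs := ENNReal.tsum_mul_right
        _ = (ENNReal.ofReal (A * r ^ (2 * N) / ζ) * ∑' (jj : ℤ), z ^ jj.natAbs) *
              ∑' (kk : ℤ), z ^ kk.natAbs := by rw [ENNReal.tsum_mul_left]
        _ = ENNReal.ofReal (A * r ^ (2 * N) / ζ) *
              ((∑' (jj : ℤ), z ^ jj.natAbs) * ∑' (kk : ℤ), z ^ kk.natAbs) := by
            rw [mul_assoc]
    have c4 : ENNReal.ofReal (A * r ^ (2 * N) / ζ) *
        ((∑' jj : ℤ, z ^ jj.natAbs) * (∑' kk : ℤ, z ^ kk.natAbs))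
        ≤ ENNReal.ofReal (A * r ^ (2 * N) / ζ) * ((2 * (1 - z)⁻¹) * (2 * (1 - z)⁻¹)) := by
      gcongr
      · exact aux_tsum_int_pow z
      · exact aux_tsum_int_pow z
    have c5 : ENNReal.ofReal (A * r ^ (2 * N) / ζ) * ((2 * (1 - z)⁻¹) * (2 * (1 - z)⁻¹))
        = ENNReal.ofReal (D * r ^ (2 * N)) := by
      have h1z : (1 : ℝ≥0∞) - z = ENNReal.ofReal (1 - ζ) := by
        rw [hzdef, ENNReal.ofReal_sub 1 hζ0.le, ENNReal.ofReal_one]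
      rw [h1z, ← ENNReal.ofReal_inv_of_pos hζ1']
      rw [show ((2 : ℝ≥0∞)) = ENNReal.ofReal (2:ℝ) by simp]
      rw [← ENNReal.ofReal_mul (by norm_num), ← ENNReal.ofReal_mul (by positivity),
        ← ENNReal.ofReal_mul (by positivity)]
      congr 1
      rw [hDdef]
      ring
    calc _ ≤ ∑' m : ℤ, G (d m) := c1
      _ ≤ ∑' p : ℤ × ℤ, G p := c2
      _ = _ := c3
      _ ≤ _ := c4
      _ = _ := c5
  -- conclude
  unfold tErr
  have hmul : ENNReal.ofReal (2 * Real.pi) *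
      (∑' m : ℤ, (‖((N : ℂ) / (2 * (Real.pi : ℂ))) * s m *
      ((2 * (Real.pi : ℂ) / (N : ℂ)) * (v (winRep N m) / s (winRep N m))) - v m‖₊ : ℝ≥0∞) ^ 2)
      ≤ ENNReal.ofReal (2 * Real.pi) * ENNReal.ofReal (D * r ^ (2 * N)) :=
    mul_le_mul' le_rfl hsum
  have hrw : R ^ (-(N : ℝ)) = r ^ N := by
    rw [Real.rpow_neg hR0.le, Real.rpow_natCast, hrdef, inv_pow]
  calc (ENNReal.ofReal (2 * Real.pi) *
      ∑' m : ℤ, (‖((N : ℂ) / (2 * (Real.pi : ℂ))) * s m *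
      ((fun k => (2 * (Real.pi : ℂ) / (N : ℂ)) * (v k / s k)) (winRep N m)) - v m‖₊ : ℝ≥0∞) ^ 2)
      ^ (1 / 2 : ℝ)
      ≤ (ENNReal.ofReal (2 * Real.pi) * ENNReal.ofReal (D * r ^ (2 * N))) ^ (1 / 2 : ℝ) :=
        ENNReal.rpow_le_rpow hmul (by norm_num)
    _ = (ENNReal.ofReal (2 * Real.pi * (D * r ^ (2 * N)))) ^ (1 / 2 : ℝ) := by
        rw [← ENNReal.ofReal_mul (show (0:ℝ) ≤ 2 * Real.pi by positivity)]
    _ = ENNReal.ofReal ((2 * Real.pi * (D * r ^ (2 * N))) ^ (1 / 2 : ℝ)) :=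
        ENNReal.ofReal_rpow_of_pos (by positivity)
    _ = ENNReal.ofReal (Real.sqrt (2 * Real.pi * D) * R ^ (-(N : ℝ))) := by
        congr 1
        rw [hrw, ← Real.sqrt_eq_rpow]
        rw [show 2 * Real.pi * (D * r ^ (2 * N)) = (2 * Real.pi * D) * (r ^ N) ^ 2 by
          rw [← pow_mul, mul_comm N 2]; ring]
        rw [Real.sqrt_mul (by positivity), Real.sqrt_sq (by positivity)]
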